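/- arXiv:1403.8133 — 2 statements merged into one kernel-verified Lean document; each statement's English description precedes it below -/
import Mathlib

section
/- Let 0 < k < n and let O_{k,n} ⊂ ℝ^{[k]×[n−k]} be the convex hull of the characteristic vectors {χ_I : I ∈ V_{k,n}}. Then for every point x ∈ O_{k,n} there exist a unique set S ⊆ V_{k,n} of pairwise nonnesting tuples and unique strictly positive coefficients (α_I)_{I ∈ S} with Σ_{I ∈ S} α_I = 1 and x = Σ_{I ∈ S} α_I χ_I. (This expresses that the nonnesting complex Δ^{NN}_{k,n} is a triangulation of the order polytope O_{k,n}.) -/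
/-- Two arcs `(i < i')` and `(j < j')` cross if `i < j < i' < j'` or `j < i < j' < i'`. -/
def Cross (i i' j j' : ℕ) : Prop :=
  (i < j ∧ j < i' ∧ i' < j') ∨ (j < i ∧ i < j' ∧ j' < i')

/-- Two arcs `(i < i')` and `(j < j')` nest if `i < j < j' < i'` or `j < i < i' < j'`. -/
def Nest (i i' j j' : ℕ) : Prop :=
  (i < j ∧ j < j' ∧ j' < i') ∨ (j < i ∧ i < i' ∧ i' < j')

/-- `I : Fin k → ℕ` represents an element of `V_{k,n}`: a strictly increasing
`k`-tuple with entries in `[n] = {1, …, n}`. -/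
def IsVkn (n : ℕ) {k : ℕ} (I : Fin k → ℕ) : Prop :=
  StrictMono I ∧ ∀ a, 1 ≤ I a ∧ I a ≤ n

/-- `I, J ∈ V_{k,n}` are noncrossing if for all indices `a < b` such that
`I l = J l` for all `a < l < b`, the arcs `(I a < I b)` and `(J a < J b)` do not cross. -/
def NonCrossing {k : ℕ} (I J : Fin k → ℕ) : Prop :=
  ∀ a b : Fin k, a < b → (∀ l : Fin k, a < l → l < b → I l = J l) →
    ¬ Cross (I a) (I b) (J a) (J b)

/-- `I, J ∈ V_{k,n}` are nonnesting if for all indices `a < b`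
the arcs `(I a < I b)` and `(J a < J b)` do not nest. -/
def NonNesting {k : ℕ} (I J : Fin k → ℕ) : Prop :=
  ∀ a b : Fin k, a < b → ¬ Nest (I a) (I b) (J a) (J b)

/-- `x` is an entry of the tuple `I` (i.e. `x` belongs to `I` viewed as a subset of `[n]`). -/
def MemT {k : ℕ} (I : Fin k → ℕ) (x : ℕ) : Prop := ∃ a, I a = x

/-- The characteristic vector `χ_I` as a real vector in `ℝ^{[k]×[m]}` (`m = n−k`),
in 0-based coordinates: `χ_I(a,b) = 1` iff `i_{a+1} ≤ a+b+1`. -/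
noncomputable def chiR (m : ℕ) {k : ℕ} (I : Fin k → ℕ) : Fin k × Fin m → ℝ :=
  fun p => if I p.1 ≤ p.1.val + p.2.val + 1 then 1 else 0


open Finset
open scoped Classical

noncomputable section Stmt12Aux

variable {k m : ℕ}

/-- membership predicate for the filter of `I` -/
def memF (m : ℕ) {k : ℕ} (I : Fin k → ℕ) (p : Fin k × Fin m) : Prop :=
  I p.1 ≤ p.1.val + p.2.val + 1

def Fset (m : ℕ) {k : ℕ} (I : Fin k → ℕ) : Finset (Fin k × Fin m) :=
  univ.filter (memF m I)

lemma mem_Fset {I : Fin k → ℕ} {p : Fin k × Fin m} : p ∈ Fset m I ↔ memF m I p := by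
  simp [Fset]

lemma mem_compl_Fset {I : Fin k → ℕ} {p : Fin k × Fin m} : p ∈ (Fset m I)ᶜ ↔ ¬ memF m I p := by
  simp [Fset]

def gx (x : Fin k × Fin m → ℝ) (I : Fin k → ℕ) : ℝ :=
  if h : (Fset m I).Nonempty then (Fset m I).inf' h x else 1

def hx (x : Fin k × Fin m → ℝ) (I : Fin k → ℕ) : ℝ :=
  if h : ((Fset m I)ᶜ).Nonempty then ((Fset m I)ᶜ).sup' h x else 0

def Tx (x : Fin k × Fin m → ℝ) : Finset ℝ :=
  insert 1 ((image x univ).filter (fun t => 0 < t))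

def predT (T : Finset ℝ) (t : ℝ) : ℝ :=
  (insert (0:ℝ) (T.filter (fun s => s < t))).max' (insert_nonempty _ _)

def phi (m : ℕ) {k : ℕ} (x : Fin k × Fin m → ℝ) (t : ℝ) : Fin k → ℕ :=
  fun a => a.val + 1 + (univ.filter (fun b : Fin m => x (a, b) < t)).card

/-- goodness of x : monotone point of the cube -/
structure GoodX (x : Fin k × Fin m → ℝ) : Prop where
  nonneg : ∀ p, 0 ≤ x p
  le_one : ∀ p, x p ≤ 1
  row : ∀ (a : Fin k) (b b' : Fin m), b ≤ b' → x (a, b) ≤ x (a, b')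
  col : ∀ (a a' : Fin k) (b : Fin m), a ≤ a' → x (a', b) ≤ x (a, b)

lemma strictMono_gap {I : Fin k → ℕ} (hI : StrictMono I) :
    ∀ (d : ℕ) (a b : Fin k), a.val + d = b.val → I a + d ≤ I b := by
  intro d
  induction d with
  | zero => intro a b h; have : a = b := Fin.ext (by omega); subst this; omega
  | succ d ih =>
    intro a b h
    have hb' : a.val + d < k := by omega
    have h1 := ih a ⟨a.val + d, hb'⟩ rfl
    have h2 : I ⟨a.val + d, hb'⟩ < I b := hI (by simp [Fin.lt_def]; omega)
    omega

lemma vkn_bounds {n : ℕ} (hkn : k ≤ n) {I : Fin k → ℕ} (hI : IsVkn n I) (a : Fin k) :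
    a.val + 1 ≤ I a ∧ I a ≤ a.val + 1 + (n - k) := by
  obtain ⟨hm, hb⟩ := hI
  have hk0 : 0 < k := a.pos
  constructor
  · have := strictMono_gap hm a.val ⟨0, hk0⟩ a (by simp)
    have := (hb ⟨0, hk0⟩).1
    omega
  · have hlast : (k - 1) < k := by omega
    have := strictMono_gap hm (k - 1 - a.val) a ⟨k - 1, hlast⟩ (by simp; omega)
    have := (hb ⟨k - 1, hlast⟩).2
    omega

end Stmt12Aux
section A2
variable {k m : ℕ}

lemma memF_mk {I : Fin k → ℕ} {a : Fin k} {b : Fin m} :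
    memF m I (a, b) ↔ I a ≤ a.val + b.val + 1 := Iff.rfl

lemma goodX_chi {n : ℕ} (hkn : k ≤ n) (hnm : n - k = m) {I : Fin k → ℕ} (hI : IsVkn n I) :
    GoodX (chiR m I) := by
  subst hnm
  constructor
  · intro p; unfold chiR; split <;> norm_num
  · intro p; unfold chiR; split <;> norm_num
  · intro a b b' hbb'
    have hb : (b : ℕ) ≤ (b' : ℕ) := hbb'
    unfold chiR; simp only
    by_cases h : I a ≤ a.val + b.val + 1
    · rw [if_pos h, if_pos (by omega)]
    · rw [if_neg h]; split <;> norm_num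
  · intro a a' b haa'
    have ha : (a : ℕ) ≤ (a' : ℕ) := haa'
    unfold chiR; simp only
    by_cases h : I a' ≤ a'.val + b.val + 1
    · have hgap := strictMono_gap hI.1 (a'.val - a.val) a a' (by omega)
      rw [if_pos h, if_pos (by omega)]
    · rw [if_neg h]; split <;> norm_num

lemma convex_goodX : Convex ℝ {y : Fin k × Fin m → ℝ | GoodX y} := by
  intro y hy z hz s t hs ht hst
  obtain ⟨y0, y1, yr, yc⟩ := hy
  obtain ⟨z0, z1, zr, zc⟩ := hz
  constructor
  · intro p
    simp only [Pi.add_apply, Pi.smul_apply, smul_eq_mul]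
    have := y0 p; have := z0 p; nlinarith
  · intro p
    simp only [Pi.add_apply, Pi.smul_apply, smul_eq_mul]
    have := y1 p; have := z1 p; nlinarith
  · intro a b b' hbb'
    simp only [Pi.add_apply, Pi.smul_apply, smul_eq_mul]
    have := yr a b b' hbb'; have := zr a b b' hbb'; nlinarith
  · intro a a' b haa'
    simp only [Pi.add_apply, Pi.smul_apply, smul_eq_mul]
    have := yc a a' b haa'; have := zc a a' b haa'; nlinarith

lemma goodX_of_hull {n : ℕ} (hkn : k ≤ n) (hnm : n - k = m) {x : Fin k × Fin m → ℝ}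
    (hx : x ∈ convexHull ℝ {y | ∃ I : Fin k → ℕ, IsVkn n I ∧ y = chiR m I}) : GoodX x := by
  have hsub : {y : Fin k × Fin m → ℝ | ∃ I : Fin k → ℕ, IsVkn n I ∧ y = chiR m I} ⊆
      {y | GoodX y} := by
    rintro y ⟨I, hI, rfl⟩
    exact goodX_chi hkn hnm hI
  exact convexHull_min hsub convex_goodX hx

/-- filter inclusion gives componentwise dominance -/
lemma le_of_fsub {n : ℕ} (hkn : k ≤ n) (hnm : n - k = m) {I J : Fin k → ℕ}
    (hI : IsVkn n I) (hJ : IsVkn n J)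
    (h : ∀ p : Fin k × Fin m, memF m I p → memF m J p) : ∀ a, J a ≤ I a := by
  subst hnm
  intro a
  obtain ⟨hIl, hIu⟩ := vkn_bounds hkn hI a
  obtain ⟨hJl, hJu⟩ := vkn_bounds hkn hJ a
  by_cases hc : I a ≤ a.val + (n - k)
  · have hb : I a - a.val - 1 < n - k := by omega
    have h1 : memF (n-k) I (a, ⟨I a - a.val - 1, hb⟩) := by
      show I a ≤ a.val + (I a - a.val - 1) + 1
      omega
    have h2 : J a ≤ a.val + (I a - a.val - 1) + 1 := h _ h1
    omega
  · omega

/-- χ determines I among IsVkn tuples (prop version). -/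
lemma chi_inj {n : ℕ} (hkn : k ≤ n) (hnm : n - k = m) {I J : Fin k → ℕ}
    (hI : IsVkn n I) (hJ : IsVkn n J)
    (h : ∀ p : Fin k × Fin m, memF m I p ↔ memF m J p) : I = J := by
  have h1 := le_of_fsub hkn hnm hI hJ (fun p => (h p).mp)
  have h2 := le_of_fsub hkn hnm hJ hI (fun p => (h p).mpr)
  funext a; exact le_antisymm (h2 a) (h1 a)

/-- componentwise dominance gives filter inclusion -/
lemma fsub_of_le {I J : Fin k → ℕ} (h : ∀ a, J a ≤ I a) :
    ∀ p : Fin k × Fin m, memF m I p → memF m J p := by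
  intro p hp; unfold memF at *; exact le_trans (h p.1) hp

/-- nonnesting strictly increasing tuples are componentwise comparable -/
lemma comparable_of_nonNesting {I J : Fin k → ℕ} (hI : StrictMono I) (hJ : StrictMono J)
    (h : NonNesting I J) : (∀ a, I a ≤ J a) ∨ (∀ a, J a ≤ I a) := by
  by_contra hc
  push_neg at hc
  obtain ⟨⟨a, ha⟩, ⟨b, hb⟩⟩ := hc
  rcases lt_trichotomy a b with hab | hab | hab
  · exact h a b hab (Or.inr ⟨ha, hI hab, hb⟩)
  · subst hab; omega
  · exact h b a hab (Or.inl ⟨hb, hJ hab, ha⟩)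

lemma nonNesting_of_le {I J : Fin k → ℕ} (hI : StrictMono I) (hJ : StrictMono J)
    (h : (∀ a, I a ≤ J a) ∨ (∀ a, J a ≤ I a)) : NonNesting I J := by
  intro a b hab hn
  rcases hn with ⟨h1, h2, h3⟩ | ⟨h1, h2, h3⟩ <;> rcases h with hle | hle
  · exact absurd (hle b) (by omega)
  · exact absurd (hle a) (by omega)
  · exact absurd (hle a) (by omega)
  · exact absurd (hle b) (by omega)

end A2
section A3
variable {k m : ℕ}

lemma Tx_pos {x : Fin k × Fin m → ℝ} (hg : GoodX x) : ∀ t ∈ Tx x, 0 < t := by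
  intro t ht
  simp only [Tx, mem_insert, mem_filter] at ht
  rcases ht with rfl | ⟨_, h⟩
  · norm_num
  · exact h

lemma Tx_le_one {x : Fin k × Fin m → ℝ} (hg : GoodX x) : ∀ t ∈ Tx x, t ≤ 1 := by
  intro t ht
  simp only [Tx, mem_insert, mem_filter, mem_image] at ht
  rcases ht with rfl | ⟨⟨p, _, rfl⟩, h⟩
  · norm_num
  · exact hg.le_one p

lemma one_mem_Tx {x : Fin k × Fin m → ℝ} : (1 : ℝ) ∈ Tx x := mem_insert_self _ _

lemma val_mem_Tx {x : Fin k × Fin m → ℝ} {p : Fin k × Fin m} (hp : 0 < x p) : x p ∈ Tx x := by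
  simp only [Tx, mem_insert, mem_filter, mem_image]
  exact Or.inr ⟨⟨p, mem_univ p, rfl⟩, hp⟩

/-- the threshold tuple has the right characteristic vector -/
lemma memF_phi {x : Fin k × Fin m → ℝ} (hg : GoodX x) {t : ℝ} (p : Fin k × Fin m) :
    memF m (phi m x t) p ↔ t ≤ x p := by
  obtain ⟨a, b⟩ := p
  rw [memF_mk]
  unfold phi
  constructor
  · intro h
    by_contra hlt
    push_neg at hlt
    have hsub : (univ.filter (fun b' : Fin m => b'.val ≤ b.val)) ⊆
        (univ.filter (fun b' : Fin m => x (a, b') < t)) := by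
      intro b' hb'
      simp only [mem_filter, mem_univ, true_and] at *
      exact lt_of_le_of_lt (hg.row a b' b hb') hlt
    have hcard := card_le_card hsub
    have : (univ.filter (fun b' : Fin m => b'.val ≤ b.val)).card = b.val + 1 := by
      have heq : (univ.filter (fun b' : Fin m => b'.val ≤ b.val)) = Iic b := by
        ext c; simp only [mem_filter, mem_univ, true_and, mem_Iic, Fin.le_def]
      rw [heq, Fin.card_Iic]
    omega
  · intro h
    have hsub : (univ.filter (fun b' : Fin m => x (a, b') < t)) ⊆
        (univ.filter (fun b' : Fin m => b' < b)) := by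
      intro b' hb'
      simp only [mem_filter, mem_univ, true_and] at *
      by_contra hge
      push_neg at hge
      exact absurd (le_trans h (hg.row a b b' hge)) (not_le.mpr hb')
    have hcard := card_le_card hsub
    have : (univ.filter (fun b' : Fin m => b' < b)).card = b.val := by
      have heq : (univ.filter (fun b' : Fin m => b' < b)) = Iio b := by
        ext c; simp
      rw [heq, Fin.card_Iio]
    omega

lemma phi_isVkn {n : ℕ} (hk : 0 < k) (hkn : k ≤ n) (hnm : n - k = m)
    {x : Fin k × Fin m → ℝ} (hg : GoodX x) {t : ℝ} (ht : 0 < t) :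
    IsVkn n (phi m x t) := by
  have hmono : ∀ a a' : Fin k, a ≤ a' →
      (univ.filter (fun b : Fin m => x (a, b) < t)).card ≤
      (univ.filter (fun b : Fin m => x (a', b) < t)).card := by
    intro a a' haa'
    apply card_le_card
    intro b hb
    simp only [mem_filter, mem_univ, true_and] at *
    exact lt_of_le_of_lt (hg.col a a' b haa') hb
  constructor
  · intro a a' haa'
    unfold phi
    have h1 := hmono a a' (le_of_lt haa')
    have h2 : a.val < a'.val := haa'
    omega
  · intro a
    unfold phi
    have hle : (univ.filter (fun b : Fin m => x (a, b) < t)).card ≤ m := by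
      refine le_trans (card_le_card (subset_univ _)) ?_
      simp
    have ha : a.val < k := a.isLt
    omega

/-- phi is monotone in t -/
lemma phi_mono {x : Fin k × Fin m → ℝ} {t t' : ℝ} (h : t ≤ t') (a : Fin k) :
    phi m x t a ≤ phi m x t' a := by
  unfold phi
  have : (univ.filter (fun b : Fin m => x (a, b) < t)).card ≤
      (univ.filter (fun b : Fin m => x (a, b) < t')).card := by
    apply card_le_card
    intro b hb
    simp only [mem_filter, mem_univ, true_and] at *
    exact lt_of_lt_of_le hb h
  omega

/-- gx of a threshold tuple -/
lemma gx_threshold {x : Fin k × Fin m → ℝ} (hg : GoodX x) {I : Fin k → ℕ} {t : ℝ}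
    (hmem : ∀ p, memF m I p ↔ t ≤ x p) (ht : t ∈ Tx x) : gx x I = t := by
  unfold gx
  split
  case isTrue hne =>
    apply le_antisymm
    · simp only [Tx, mem_insert, mem_filter, mem_image] at ht
      rcases ht with rfl | ⟨⟨q, _, rfl⟩, hq⟩
      · obtain ⟨p, hp⟩ := hne
        have h1 : (1:ℝ) ≤ x p := (hmem p).mp (mem_Fset.mp hp)
        calc (Fset m I).inf' _ x ≤ x p := inf'_le x hp
        _ = 1 := le_antisymm (hg.le_one p) h1
      · exact inf'_le x (mem_Fset.mpr ((hmem q).mpr (le_refl _)))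
    · apply le_inf'
      intro p hp
      exact (hmem p).mp (mem_Fset.mp hp)
  case isFalse hne =>
    simp only [Tx, mem_insert, mem_filter, mem_image] at ht
    rcases ht with rfl | ⟨⟨q, _, rfl⟩, hq⟩
    · rfl
    · exact absurd ⟨q, mem_Fset.mpr ((hmem q).mpr (le_refl _))⟩ hne

/-- hx of a threshold tuple -/
lemma hx_threshold {x : Fin k × Fin m → ℝ} (hg : GoodX x) {I : Fin k → ℕ} {t : ℝ}
    (hmem : ∀ p, memF m I p ↔ t ≤ x p) (ht : t ∈ Tx x) : hx x I = predT (Tx x) t := by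
  have htle : t ≤ 1 := Tx_le_one hg t ht
  unfold hx
  split
  case isTrue hne =>
    apply le_antisymm
    · -- sup' ≤ predT : every q ∉ F has x q ∈ insert 0 (filter)
      apply sup'_le
      intro q hq
      have hq' : ¬ t ≤ x q := fun h => (mem_compl_Fset.mp hq) ((hmem q).mpr h)
      push_neg at hq'
      apply le_max'
      simp only [mem_insert, mem_filter]
      rcases eq_or_lt_of_le (hg.nonneg q) with h0 | h0
      · exact Or.inl h0.symm
      · exact Or.inr ⟨val_mem_Tx h0, hq'⟩
    · -- predT ≤ sup'
      apply max'_le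
      intro s hs
      simp only [mem_insert, mem_filter] at hs
      rcases hs with rfl | ⟨hsT, hst⟩
      · obtain ⟨q, hq⟩ := hne
        exact le_trans (hg.nonneg q) (le_sup' x hq)
      · -- s ∈ Tx, s < t; s is a value x q with x q < t, so q ∉ F
        simp only [Tx, mem_insert, mem_filter, mem_image] at hsT
        rcases hsT with rfl | ⟨⟨q, _, rfl⟩, hq0⟩
        · linarith
        · have : ¬ memF m I q := fun h => absurd ((hmem q).mp h) (not_le.mpr hst)
          exact le_sup' x (mem_compl_Fset.mpr this)
  case isFalse hne =>
    -- complement empty : all points satisfy x q >= t ; so no element of Tx is < t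
    symm
    unfold predT
    apply le_antisymm
    · apply max'_le
      intro s hs
      simp only [mem_insert, mem_filter] at hs
      rcases hs with rfl | ⟨hsT, hst⟩
      · exact le_refl 0
      · simp only [Tx, mem_insert, mem_filter, mem_image] at hsT
        rcases hsT with rfl | ⟨⟨q, _, rfl⟩, hq0⟩
        · linarith
        · exfalso
          have hqF : memF m I q := by
            by_contra hc
            exact absurd ⟨q, mem_compl_Fset.mpr hc⟩ hne
          exact absurd ((hmem q).mp hqF) (by linarith)
    · exact le_max' _ 0 (mem_insert_self 0 _)

end A3
section A4
variable {k m : ℕ}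

lemma predT_lt {T : Finset ℝ} {t : ℝ} (ht : 0 < t) : predT T t < t := by
  unfold predT
  rw [max'_lt_iff]
  intro s hs
  simp only [mem_insert, mem_filter] at hs
  rcases hs with rfl | ⟨_, h⟩
  · exact ht
  · exact h

lemma zero_le_predT {T : Finset ℝ} {t : ℝ} : 0 ≤ predT T t :=
  le_max' _ 0 (mem_insert_self 0 _)

lemma max'_eq_of_eq {s t : Finset ℝ} (hs : s.Nonempty) (h : s = t) :
    s.max' hs = t.max' (h ▸ hs) := by subst h; rfl

lemma predT_eq_of_filter_eq {T U : Finset ℝ} {t : ℝ}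
    (h : T.filter (fun s => s < t) = U.filter (fun s => s < t)) :
    predT T t = predT U t := by
  unfold predT
  exact max'_eq_of_eq _ (by rw [h])

/-- telescoping sum -/
lemma telescope : ∀ (T : Finset ℝ), (∀ t ∈ T, 0 < t) →
    ∑ t ∈ T, (t - predT T t) = if h : T.Nonempty then T.max' h else 0 := by
  intro T
  induction T using Finset.strongInduction with
  | _ T ih =>
    intro hpos
    rcases eq_or_ne T ∅ with rfl | hTne
    · simp
    · have hne : T.Nonempty := nonempty_iff_ne_empty.mpr hTne
      rw [dif_pos hne]
      have hMT : T.max' hne ∈ T := T.max'_mem hne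
      have hsplit : ∑ t ∈ T.erase (T.max' hne), (t - predT T t) +
          ((T.max' hne) - predT T (T.max' hne)) = ∑ t ∈ T, (t - predT T t) :=
        Finset.sum_erase_add T _ hMT
      have hpred_eq : ∀ t ∈ T.erase (T.max' hne), predT T t = predT (T.erase (T.max' hne)) t := by
        intro t htT'
        have htT : t ∈ T := mem_of_mem_erase htT'
        apply predT_eq_of_filter_eq
        ext s
        simp only [mem_filter, mem_erase]
        constructor
        · rintro ⟨hsT, hst⟩
          refine ⟨⟨?_, hsT⟩, hst⟩
          intro hsM
          have := T.le_max' t htT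
          rw [hsM] at hst
          linarith
        · rintro ⟨⟨_, hsT⟩, hst⟩
          exact ⟨hsT, hst⟩
      have hfilterM : T.filter (fun s => s < T.max' hne) = T.erase (T.max' hne) := by
        ext s
        simp only [mem_filter, mem_erase]
        constructor
        · rintro ⟨hsT, hsM⟩
          exact ⟨ne_of_lt hsM, hsT⟩
        · rintro ⟨hne', hsT⟩
          exact ⟨hsT, lt_of_le_of_ne (T.le_max' s hsT) hne'⟩
      have hsum' : ∑ t ∈ T.erase (T.max' hne), (t - predT T t) =
          ∑ t ∈ T.erase (T.max' hne), (t - predT (T.erase (T.max' hne)) t) :=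
        sum_congr rfl (fun t ht => by rw [hpred_eq t ht])
      have hih := ih (T.erase (T.max' hne)) (erase_ssubset hMT)
        (fun t ht => hpos t (mem_of_mem_erase ht))
      have hpredM : predT T (T.max' hne) =
          (insert (0:ℝ) (T.erase (T.max' hne))).max' (insert_nonempty _ _) := by
        unfold predT
        exact max'_eq_of_eq _ (by rw [hfilterM])
      rcases eq_or_ne (T.erase (T.max' hne)) ∅ with hT'e | hT'ne
      · have h0 : predT T (T.max' hne) = 0 := by
          rw [hpredM]
          rw [max'_eq_of_eq _ (show insert (0:ℝ) (T.erase (T.max' hne)) = {0} by rw [hT'e]; rfl)]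
          simp
        rw [← hsplit, hsum', hih, dif_neg (by rw [hT'e]; exact not_nonempty_empty), h0]
        ring
      · have hT'nonempty : (T.erase (T.max' hne)).Nonempty := nonempty_iff_ne_empty.mpr hT'ne
        have h0 : predT T (T.max' hne) = (T.erase (T.max' hne)).max' hT'nonempty := by
          rw [hpredM, max'_insert]
          have hge : (0:ℝ) ≤ (T.erase (T.max' hne)).max' hT'nonempty := by
            obtain ⟨t, ht⟩ := hT'nonempty
            exact le_trans (le_of_lt (hpos t (mem_of_mem_erase ht))) (le_max' _ t ht)
          exact max_eq_right hge
        rw [← hsplit, hsum', hih, dif_pos hT'nonempty, h0]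
        ring

/-- telescoping sum over an initial segment -/
lemma telescope_le (T : Finset ℝ) (hpos : ∀ t ∈ T, 0 < t) (c : ℝ) :
    ∑ t ∈ T.filter (fun s => s ≤ c), (t - predT T t) =
      if h : (T.filter (fun s => s ≤ c)).Nonempty then (T.filter (fun s => s ≤ c)).max' h
      else 0 := by
  have hpred : ∀ t ∈ T.filter (fun s => s ≤ c), predT T t = predT (T.filter (fun s => s ≤ c)) t := by
    intro t ht
    rw [mem_filter] at ht
    apply predT_eq_of_filter_eq
    ext s
    simp only [mem_filter]
    constructor
    · rintro ⟨hsT, hst⟩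
      exact ⟨⟨hsT, le_trans (le_of_lt hst) ht.2⟩, hst⟩
    · rintro ⟨⟨hsT, _⟩, hst⟩
      exact ⟨hsT, hst⟩
  rw [sum_congr rfl (fun t ht => by rw [hpred t ht])]
  exact telescope _ (fun t ht => hpos t (mem_filter.mp ht).1)

/-- injectivity of phi on Tx (Finset version) -/
lemma phi_inj_Tx {x : Fin k × Fin m → ℝ} (hg : GoodX x) {t t' : ℝ}
    (ht : t ∈ Tx x) (ht' : t' ∈ Tx x) (hphi : phi m x t = phi m x t') : t = t' := by
  have key : ∀ s s' : ℝ, s ∈ Tx x → s' ∈ Tx x → phi m x s = phi m x s' → ¬ s < s' := by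
    intro s s' hs hs' hp hlt
    have hiff : ∀ p, s ≤ x p ↔ s' ≤ x p := by
      intro p
      rw [← memF_phi hg p, ← memF_phi hg p, hp]
    simp only [Tx, mem_insert, mem_filter, mem_image] at hs
    rcases hs with rfl | ⟨⟨q, _, rfl⟩, hq⟩
    · have := Tx_le_one hg s' hs'
      linarith
    · have := (hiff q).mp (le_refl _)
      linarith
  rcases lt_trichotomy t t' with h | h | h
  · exact absurd h (key t t' ht ht' hphi)
  · exact h
  · exact absurd h (key t' t ht' ht hphi.symm)

end A4
section A5
variable {n k m : ℕ} {x : Fin k × Fin m → ℝ} {S' : Finset (Fin k → ℕ)} {α' : (Fin k → ℕ) → ℝ}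

/-- pointwise value of the decomposition -/
lemma u_point (hdec : ∀ p, x p = ∑ I ∈ S', α' I * chiR m I p) (p : Fin k × Fin m) :
    x p = ∑ I ∈ S'.filter (fun I => memF m I p), α' I := by
  rw [hdec p, Finset.sum_filter]
  apply sum_congr rfl
  intro I _
  have hch : chiR m I p = if memF m I p then (1:ℝ) else 0 := if_congr Iff.rfl rfl rfl
  rw [hch]
  split <;> simp

lemma gx_of_nonempty {I : Fin k → ℕ} (hne : (Fset m I).Nonempty) :
    gx x I = (Fset m I).inf' hne x := dif_pos hne

lemma gx_of_empty {I : Fin k → ℕ} (hne : ¬ (Fset m I).Nonempty) :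
    gx x I = 1 := dif_neg hne

lemma hx_of_nonempty {I : Fin k → ℕ} (hne : ((Fset m I)ᶜ).Nonempty) :
    hx x I = ((Fset m I)ᶜ).sup' hne x := dif_pos hne

lemma hx_of_empty {I : Fin k → ℕ} (hne : ¬ ((Fset m I)ᶜ).Nonempty) :
    hx x I = 0 := dif_neg hne

lemma gx_attained {I : Fin k → ℕ} (hne : (Fset m I).Nonempty) :
    ∃ p, memF m I p ∧ x p = gx x I := by
  obtain ⟨p, hp, hxp⟩ := Finset.exists_mem_eq_inf' hne x
  exact ⟨p, mem_Fset.mp hp, by rw [gx_of_nonempty hne, hxp]⟩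

lemma gx_le_of_memF {I : Fin k → ℕ} {p : Fin k × Fin m} (hp : memF m I p) :
    gx x I ≤ x p := by
  rw [gx_of_nonempty ⟨p, mem_Fset.mpr hp⟩]
  exact inf'_le x (mem_Fset.mpr hp)

section Chain
variable (hV : ∀ I ∈ S', IsVkn n I) (hNN : ∀ I ∈ S', ∀ J ∈ S', NonNesting I J)
  (hpos : ∀ I ∈ S', 0 < α' I) (hsum : ∑ I ∈ S', α' I = 1)
  (hdec : ∀ p, x p = ∑ I ∈ S', α' I * chiR m I p)

include hV hNN in
lemma u_chain : ∀ I ∈ S', ∀ J ∈ S',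
    (∀ p : Fin k × Fin m, memF m I p → memF m J p) ∨
    (∀ p : Fin k × Fin m, memF m J p → memF m I p) := by
  intro I hI J hJ
  rcases comparable_of_nonNesting (hV I hI).1 (hV J hJ).1 (hNN I hI J hJ) with h | h
  · exact Or.inr (fun p hp => fsub_of_le h p hp)
  · exact Or.inl (fun p hp => fsub_of_le h p hp)

include hV hNN hpos hsum hdec in
/-- the filter of each I ∈ S' is a threshold set at level gx x I -/
lemma u_threshold : ∀ I ∈ S', ∀ p, memF m I p ↔ gx x I ≤ x p := by
  intro I hI p
  constructor
  · exact gx_le_of_memF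
  · intro hp
    by_contra hq
    by_cases hne : (Fset m I).Nonempty
    · obtain ⟨p₀, hmemp₀, hp₀⟩ := gx_attained (x := x) hne
      have hsub : S'.filter (fun J => memF m J p) ⊆
          (S'.filter (fun J => memF m J p₀)).erase I := by
        intro J hJ'
        rw [mem_filter] at hJ'
        obtain ⟨hJS, hJp⟩ := hJ'
        rw [mem_erase, mem_filter]
        refine ⟨fun hJI => hq (hJI ▸ hJp), hJS, ?_⟩
        rcases u_chain hV hNN I hI J hJS with h | h
        · exact h p₀ hmemp₀
        · exact absurd (h p hJp) hq
      have h1 : x p ≤ ∑ J ∈ (S'.filter (fun J => memF m J p₀)).erase I, α' J := by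
        rw [u_point hdec p]
        apply sum_le_sum_of_subset_of_nonneg hsub
        intro J hJ' _
        exact le_of_lt (hpos J (mem_filter.mp (mem_of_mem_erase hJ')).1)
      have h2 : ∑ J ∈ (S'.filter (fun J => memF m J p₀)).erase I, α' J + α' I
          = x p₀ := by
        rw [u_point hdec p₀]
        exact Finset.sum_erase_add _ _ (mem_filter.mpr ⟨hI, hmemp₀⟩)
      have h3 := hpos I hI
      rw [← hp₀] at hp
      linarith
    · rw [gx_of_empty hne] at hp
      have hsub : S'.filter (fun J => memF m J p) ⊆ S'.erase I := by
        intro J hJ'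
        rw [mem_filter] at hJ'
        rw [mem_erase]
        exact ⟨fun hJI => absurd ⟨p, mem_Fset.mpr (hJI ▸ hJ'.2)⟩ hne, hJ'.1⟩
      have h1 : x p ≤ ∑ J ∈ S'.erase I, α' J := by
        rw [u_point hdec p]
        apply sum_le_sum_of_subset_of_nonneg hsub
        intro J hJ' _
        exact le_of_lt (hpos J (mem_of_mem_erase hJ'))
      have h2 : ∑ J ∈ S'.erase I, α' J + α' I = 1 := by
        rw [← hsum]
        exact Finset.sum_erase_add _ _ hI
      have h3 := hpos I hI
      linarith

include hpos hdec in
lemma u_gx_mem (hg : GoodX x) : ∀ I ∈ S', gx x I ∈ Tx x := by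
  intro I hI
  by_cases hne : (Fset m I).Nonempty
  · obtain ⟨p₀, hmemp₀, hp₀⟩ := gx_attained (x := x) hne
    rw [← hp₀]
    apply val_mem_Tx
    have h1 : α' I ≤ ∑ J ∈ S'.filter (fun J => memF m J p₀), α' J := by
      apply Finset.single_le_sum (f := α')
      · intro J hJ
        exact le_of_lt (hpos J (mem_filter.mp hJ).1)
      · exact mem_filter.mpr ⟨hI, hmemp₀⟩
    rw [← u_point hdec p₀] at h1
    exact lt_of_lt_of_le (hpos I hI) h1
  · rw [gx_of_empty hne]
    exact one_mem_Tx

section WithN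
variable (hk : 0 < k) (hkn : k ≤ n) (hnm : n - k = m) (hg : GoodX x)

include hk hkn hnm hg hV hNN hpos hsum hdec in
lemma u_eq_phi : ∀ I ∈ S', I = phi m x (gx x I) := by
  intro I hI
  have hTx := u_gx_mem hpos hdec hg I hI
  apply chi_inj hkn hnm (hV I hI) (phi_isVkn hk hkn hnm hg (Tx_pos hg _ hTx))
  intro p
  rw [u_threshold hV hNN hpos hsum hdec I hI p, memF_phi hg p]

include hk hkn hnm hg hV hNN hpos hsum hdec in
lemma u_surj : ∀ t ∈ Tx x, phi m x t ∈ S' := by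
  have hthr := u_threshold hV hNN hpos hsum hdec
  have hS'ne : S'.Nonempty := by
    rw [nonempty_iff_ne_empty]
    intro h
    rw [h, sum_empty] at hsum
    norm_num at hsum
  intro t ht
  suffices hfind : ∃ I₀ ∈ S', gx x I₀ = t by
    obtain ⟨I₀, hI₀, hgx⟩ := hfind
    have := u_eq_phi hV hNN hpos hsum hdec hk hkn hnm hg I₀ hI₀
    rw [hgx] at this
    rw [← this]
    exact hI₀
  have hmain : ∀ q : Fin k × Fin m, 0 < x q → ∃ I₀ ∈ S', gx x I₀ = x q := by
    intro q hq
    have hAne : (S'.filter (fun J => memF m J q)).Nonempty := by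
      rw [nonempty_iff_ne_empty]
      intro h
      have := u_point hdec q
      rw [h, sum_empty] at this
      linarith
    obtain ⟨I₀, hI₀A, hmax⟩ := Finset.exists_max_image _ (gx x) hAne
    rw [mem_filter] at hI₀A
    obtain ⟨hI₀S, hI₀q⟩ := hI₀A
    refine ⟨I₀, hI₀S, ?_⟩
    have hle : gx x I₀ ≤ x q := gx_le_of_memF hI₀q
    rcases eq_or_lt_of_le hle with heq | hlt
    · exact heq
    · exfalso
      have hFne : (Fset m I₀).Nonempty := ⟨q, mem_Fset.mpr hI₀q⟩
      obtain ⟨p', hp'F, hp'⟩ := gx_attained (x := x) hFne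
      have hAeq : S'.filter (fun J => memF m J p') = S'.filter (fun J => memF m J q) := by
        ext J
        simp only [mem_filter]
        constructor
        · rintro ⟨hJS, hJp'⟩
          refine ⟨hJS, (hthr J hJS q).mpr ?_⟩
          have := (hthr J hJS p').mp hJp'
          rw [hp'] at this
          linarith
        · rintro ⟨hJS, hJq⟩
          refine ⟨hJS, (hthr J hJS p').mpr ?_⟩
          rw [hp']
          exact hmax J (mem_filter.mpr ⟨hJS, hJq⟩)
      have hqq : x q = x p' := by
        rw [u_point hdec q, u_point hdec p', hAeq]
      rw [hp'] at hqq
      linarith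
  simp only [Tx, mem_insert, mem_filter, mem_image] at ht
  rcases ht with rfl | ⟨⟨q, _, rfl⟩, hq⟩
  · obtain ⟨I₀, hI₀S, hmax⟩ := Finset.exists_max_image _ (gx x) hS'ne
    refine ⟨I₀, hI₀S, ?_⟩
    by_cases hFne : (Fset m I₀).Nonempty
    · obtain ⟨p', hp'F, hp'⟩ := gx_attained (x := x) hFne
      have hall : S'.filter (fun J => memF m J p') = S' := by
        apply Finset.filter_true_of_mem
        intro J hJS
        apply (hthr J hJS p').mpr
        rw [hp']
        exact hmax J hJS
      have h1 : x p' = 1 := by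
        rw [u_point hdec p', hall, hsum]
      rw [← hp', h1]
    · exact gx_of_empty hFne
  · exact hmain q hq

include hk hkn hnm hg hV hNN hpos hsum hdec in
lemma u_alpha : ∀ I ∈ S', α' I = gx x I - hx x I := by
  have hthr := u_threshold hV hNN hpos hsum hdec
  intro I hI
  have hginj : ∀ J ∈ S', gx x J = gx x I → J = I := by
    intro J hJ hg'
    apply chi_inj hkn hnm (hV J hJ) (hV I hI)
    intro p
    rw [hthr J hJ p, hthr I hI p, hg']
  have hgI_le_one : gx x I ≤ 1 := Tx_le_one hg _ (u_gx_mem hpos hdec hg I hI)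
  have hsubq : ∀ q : Fin k × Fin m, ¬ memF m I q →
      S'.filter (fun J => memF m J q) ⊆ S'.filter (fun J => gx x J < gx x I) := by
    intro q hqnI J hJ'
    rw [mem_filter] at hJ' ⊢
    obtain ⟨hJS, hJq⟩ := hJ'
    refine ⟨hJS, ?_⟩
    have h1 := (hthr J hJS q).mp hJq
    have h2 : ¬ gx x I ≤ x q := fun hc => hqnI ((hthr I hI q).mpr hc)
    push_neg at h2
    linarith
  have claim1 : ∑ J ∈ S'.filter (fun J => gx x J ≤ gx x I), α' J = gx x I := by
    by_cases hne : (Fset m I).Nonempty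
    · obtain ⟨p₀, hp₀F, hp₀⟩ := gx_attained (x := x) hne
      have heq : S'.filter (fun J => memF m J p₀) = S'.filter (fun J => gx x J ≤ gx x I) := by
        ext J
        simp only [mem_filter]
        constructor
        · rintro ⟨hJS, hJp⟩
          refine ⟨hJS, ?_⟩
          have := (hthr J hJS p₀).mp hJp
          rw [hp₀] at this
          exact this
        · rintro ⟨hJS, hJle⟩
          exact ⟨hJS, (hthr J hJS p₀).mpr (by rw [hp₀]; exact hJle)⟩
      rw [← heq, ← u_point hdec p₀, hp₀]
    · rw [gx_of_empty hne]
      have heq : S'.filter (fun J => gx x J ≤ gx x I) = S' := by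
        apply filter_true_of_mem
        intro J hJS
        calc gx x J ≤ 1 := Tx_le_one hg _ (u_gx_mem hpos hdec hg J hJS)
        _ = gx x I := (gx_of_empty hne).symm
      rw [gx_of_empty hne] at heq
      rw [heq, hsum]
  have claim2 : ∑ J ∈ S'.filter (fun J => gx x J < gx x I), α' J = hx x I := by
    by_cases hBne : (S'.filter (fun J => gx x J < gx x I)).Nonempty
    · obtain ⟨J₀, hJ₀B, hmax⟩ := Finset.exists_max_image _ (gx x) hBne
      rw [mem_filter] at hJ₀B
      obtain ⟨hJ₀S, hJ₀lt⟩ := hJ₀B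
      have hJ₀Fne : (Fset m J₀).Nonempty := by
        by_contra hc
        rw [gx_of_empty hc] at hJ₀lt
        linarith
      obtain ⟨q₀, hq₀F, hq₀⟩ := gx_attained (x := x) hJ₀Fne
      have hq₀nI : ¬ memF m I q₀ := by
        intro hc
        have := (hthr I hI q₀).mp hc
        rw [hq₀] at this
        linarith
      have hcne : ((Fset m I)ᶜ).Nonempty := ⟨q₀, mem_compl_Fset.mpr hq₀nI⟩
      have hBq₀ : S'.filter (fun J => memF m J q₀) =
          S'.filter (fun J => gx x J < gx x I) := by
        apply Finset.Subset.antisymm (hsubq q₀ hq₀nI)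
        intro J hJ'
        rw [mem_filter] at hJ' ⊢
        obtain ⟨hJS, hJlt⟩ := hJ'
        refine ⟨hJS, (hthr J hJS q₀).mpr ?_⟩
        rw [hq₀]
        exact hmax J (mem_filter.mpr ⟨hJS, hJlt⟩)
      have hxq₀ : x q₀ = ∑ J ∈ S'.filter (fun J => gx x J < gx x I), α' J := by
        rw [u_point hdec q₀, hBq₀]
      rw [hx_of_nonempty hcne]
      apply le_antisymm
      · rw [← hxq₀]
        exact le_sup' x (mem_compl_Fset.mpr hq₀nI)
      · apply sup'_le
        intro q hqc
        have hqnI : ¬ memF m I q := mem_compl_Fset.mp hqc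
        rw [u_point hdec q]
        exact sum_le_sum_of_subset_of_nonneg (hsubq q hqnI)
          (fun J hJ' _ => le_of_lt (hpos J (mem_filter.mp hJ').1))
    · rw [not_nonempty_iff_eq_empty] at hBne
      rw [hBne, sum_empty]
      by_cases hcne : ((Fset m I)ᶜ).Nonempty
      · symm
        rw [hx_of_nonempty hcne]
        apply le_antisymm
        · apply sup'_le
          intro q hqc
          have hqnI : ¬ memF m I q := mem_compl_Fset.mp hqc
          have : S'.filter (fun J => memF m J q) = ∅ := by
            have := hsubq q hqnI
            rw [hBne] at this
            exact subset_empty.mp this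
          rw [u_point hdec q, this, sum_empty]
        · obtain ⟨q, hq⟩ := hcne
          exact le_trans (hg.nonneg q) (le_sup' x hq)
      · rw [hx_of_empty hcne]
  have hIinsert : S'.filter (fun J => gx x J ≤ gx x I) =
      insert I (S'.filter (fun J => gx x J < gx x I)) := by
    ext J
    simp only [mem_filter, mem_insert]
    constructor
    · rintro ⟨hJS, hle⟩
      rcases eq_or_lt_of_le hle with heq | hlt
      · exact Or.inl (hginj J hJS heq)
      · exact Or.inr ⟨hJS, hlt⟩
    · rintro (rfl | ⟨hJS, hlt⟩)
      · exact ⟨hI, le_refl _⟩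
      · exact ⟨hJS, le_of_lt hlt⟩
  have hInotB : I ∉ S'.filter (fun J => gx x J < gx x I) := by
    simp only [mem_filter]
    rintro ⟨_, hlt⟩
    exact lt_irrefl _ hlt
  rw [hIinsert, sum_insert hInotB] at claim1
  linarith

end WithN
end Chain
end A5

/-- the nonnesting complex triangulates the order polytope
`O_{k,n} = conv{χ_I : I ∈ V_{k,n}}`: every point of `O_{k,n}` is in a unique way a
convex combination with strictly positive coefficients of the characteristic vectors
of a pairwise nonnesting subset of `V_{k,n}`. -/
theorem stmt12 {n k : ℕ} (hk : 0 < k) (hkn : k < n)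
    (x : Fin k × Fin (n - k) → ℝ)
    (hx : x ∈ convexHull ℝ {y | ∃ I : Fin k → ℕ, IsVkn n I ∧ y = chiR (n - k) I}) :
    ∃ (S : Finset (Fin k → ℕ)) (α : (Fin k → ℕ) → ℝ),
      ((∀ I ∈ S, IsVkn n I) ∧ (∀ I ∈ S, ∀ J ∈ S, NonNesting I J) ∧
        (∀ I ∈ S, 0 < α I) ∧ (∑ I ∈ S, α I) = 1 ∧
        x = ∑ I ∈ S, α I • chiR (n - k) I) ∧
      ∀ (S' : Finset (Fin k → ℕ)) (α' : (Fin k → ℕ) → ℝ),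
        ((∀ I ∈ S', IsVkn n I) ∧ (∀ I ∈ S', ∀ J ∈ S', NonNesting I J) ∧
          (∀ I ∈ S', 0 < α' I) ∧ (∑ I ∈ S', α' I) = 1 ∧
          x = ∑ I ∈ S', α' I • chiR (n - k) I) →
        S' = S ∧ ∀ I ∈ S, α' I = α I := by
  have hkn' : k ≤ n := le_of_lt hkn
  have hg : GoodX x := goodX_of_hull hkn' rfl hx
  refine ⟨(Tx x).image (phi (n - k) x), fun I => gx x I - _root_.hx x I, ⟨?_, ?_, ?_, ?_, ?_⟩, ?_⟩
  · intro I hI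
    obtain ⟨t, ht, rfl⟩ := Finset.mem_image.mp hI
    exact phi_isVkn hk hkn' rfl hg (Tx_pos hg t ht)
  · intro I hI J hJ
    obtain ⟨t, ht, rfl⟩ := Finset.mem_image.mp hI
    obtain ⟨t', ht', rfl⟩ := Finset.mem_image.mp hJ
    apply nonNesting_of_le (phi_isVkn hk hkn' rfl hg (Tx_pos hg t ht)).1
      (phi_isVkn hk hkn' rfl hg (Tx_pos hg t' ht')).1
    rcases le_total t t' with h | h
    · exact Or.inl (fun a => phi_mono h a)
    · exact Or.inr (fun a => phi_mono h a)
  · intro I hI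
    obtain ⟨t, ht, rfl⟩ := Finset.mem_image.mp hI
    show 0 < gx x (phi (n - k) x t) - _root_.hx x (phi (n - k) x t)
    rw [gx_threshold hg (memF_phi hg) ht, hx_threshold hg (memF_phi hg) ht]
    have := predT_lt (T := Tx x) (Tx_pos hg t ht)
    linarith
  · rw [Finset.sum_image (fun t ht t' ht' h => phi_inj_Tx hg ht ht' h)]
    rw [Finset.sum_congr rfl (fun t ht => by
      rw [gx_threshold hg (memF_phi hg) ht, hx_threshold hg (memF_phi hg) ht])]
    rw [telescope _ (Tx_pos hg)]
    split
    case isTrue h =>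
      exact le_antisymm (Finset.max'_le _ _ _ (Tx_le_one hg)) (Finset.le_max' _ 1 one_mem_Tx)
    case isFalse h => exact absurd ⟨1, one_mem_Tx⟩ h
  · funext p
    rw [Finset.sum_apply]
    rw [Finset.sum_image (fun t ht t' ht' h => phi_inj_Tx hg ht ht' h)]
    have hterm : ∀ t ∈ Tx x,
        ((fun I => gx x I - _root_.hx x I) (phi (n - k) x t) • chiR (n - k) (phi (n - k) x t)) p
        = if t ≤ x p then (t - predT (Tx x) t) else 0 := by
      intro t ht
      rw [Pi.smul_apply, smul_eq_mul]
      simp only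
      rw [gx_threshold hg (memF_phi hg) ht, hx_threshold hg (memF_phi hg) ht]
      have hch : chiR (n - k) (phi (n - k) x t) p = if t ≤ x p then (1:ℝ) else 0 :=
        if_congr (memF_phi hg p) rfl rfl
      rw [hch, mul_ite, mul_one, mul_zero]
    rw [Finset.sum_congr rfl hterm, ← Finset.sum_filter]
    rw [telescope_le _ (Tx_pos hg) (x p)]
    split
    case isTrue hne =>
      obtain ⟨t, ht⟩ := hne
      rw [Finset.mem_filter] at ht
      have hxp0 : 0 < x p := lt_of_lt_of_le (Tx_pos hg t ht.1) ht.2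
      have hxpT : x p ∈ (Tx x).filter (fun s => s ≤ x p) :=
        Finset.mem_filter.mpr ⟨val_mem_Tx hxp0, le_refl _⟩
      exact le_antisymm (Finset.le_max' _ _ hxpT)
        (Finset.max'_le _ _ _ (fun s hs => (Finset.mem_filter.mp hs).2))
    case isFalse hne =>
      by_contra hne0
      have hxp0 : 0 < x p := lt_of_le_of_ne (hg.nonneg p) (fun h => hne0 h.symm)
      exact hne ⟨x p, Finset.mem_filter.mpr ⟨val_mem_Tx hxp0, le_refl _⟩⟩
  · rintro S' α' ⟨h1, h2, h3, h4, h5⟩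
    have hdec : ∀ p, x p = ∑ I ∈ S', α' I * chiR (n - k) I p := by
      intro p
      rw [h5, Finset.sum_apply]
      exact Finset.sum_congr rfl (fun I _ => by rw [Pi.smul_apply, smul_eq_mul])
    have hSS : S' = (Tx x).image (phi (n - k) x) := by
      ext I
      constructor
      · intro hI
        exact Finset.mem_image.mpr ⟨gx x I, u_gx_mem h3 hdec hg I hI,
          (u_eq_phi h1 h2 h3 h4 hdec hk hkn' rfl hg I hI).symm⟩
      · intro hI
        obtain ⟨t, ht, rfl⟩ := Finset.mem_image.mp hI
        exact u_surj h1 h2 h3 h4 hdec hk hkn' rfl hg t ht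
    refine ⟨hSS, ?_⟩
    intro I hI
    rw [← hSS] at hI
    exact u_alpha h1 h2 h3 h4 hdec hk hkn' rfl hg I hI
end

section
/- Let P be a finite poset and let E ⊆ F be two order filters of P. Let P'_1, …, P'_d be the connected components of the induced subposet on F \ E (connected components of its comparability graph). Let C = conv{ χ_E + Σ_{b ∈ S} χ_{P'_b} : S ⊆ {1,…,d} } ⊆ ℝ^P. Then C is a face of the order polytope O(P) (i.e., an extreme convex subset of O(P)) containing χ_E and χ_F, and C is contained in every face of O(P) that contains both χ_E and χ_F; moreover C equals the Minkowski sum χ_E + [0,1]·χ_{P'_1} + ⋯ + [0,1]·χ_{P'_d}, so C is affinely isomorphic to a cube of dimension d. -/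
/-- The comparability graph of the induced subposet on `F \ E`: two distinct
elements are adjacent iff they are comparable. -/
def compGraph {P : Type*} [PartialOrder P] (F E : Set P) : SimpleGraph ↥(F \ E) :=
  SimpleGraph.fromRel (fun a b => (a : P) ≤ (b : P))

/-- The connected component `v` of the comparability graph of `F \ E`, viewed as a
subset of `P`. -/
def compSet {P : Type*} [PartialOrder P] (F E : Set P)
    (v : (compGraph F E).ConnectedComponent) : Set P :=
  {a : P | ∃ h : a ∈ F \ E, (compGraph F E).connectedComponentMk ⟨a, h⟩ = v}

/-- The characteristic vector of a subset `A ⊆ P`, as a point of `ℝ^P`. -/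
noncomputable def chiSet {P : Type*} (A : Set P) : P → ℝ := A.indicator 1

/-- The order polytope `O(P) = {x ∈ [0,1]^P : x_a ≤ x_b whenever a ≤ b}`. -/
def orderPolytope (P : Type*) [PartialOrder P] : Set (P → ℝ) :=
  {x | (∀ a, 0 ≤ x a ∧ x a ≤ 1) ∧ ∀ a b : P, a ≤ b → x a ≤ x b}

open scoped Classical

section Aux

variable {P : Type*} [PartialOrder P] [Fintype P] (E F : Set P)

/-- The affine parametrization of the cube. -/
noncomputable def ftAux (t : (compGraph F E).ConnectedComponent → ℝ) : P → ℝ :=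
  chiSet E + ∑ᶠ v, t v • chiSet (compSet F E v)

variable {E F}

lemma ft_eval (t : (compGraph F E).ConnectedComponent → ℝ) (a : P) :
    ftAux E F t a = if a ∈ E then 1 else
      if h : a ∈ F \ E then t ((compGraph F E).connectedComponentMk ⟨a, h⟩) else 0 := by
  haveI : Fintype (compGraph F E).ConnectedComponent := Fintype.ofFinite _
  have hsum : (∑ᶠ v, t v • chiSet (compSet F E v)) a
      = ∑ v, t v * (if a ∈ compSet F E v then 1 else 0) := by
    rw [finsum_eq_sum_of_fintype, Finset.sum_apply]
    refine Finset.sum_congr rfl fun v _ => ?_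
    simp [chiSet, Set.indicator_apply, mul_ite]
  have hE' : ftAux E F t a = (if a ∈ E then 1 else 0)
      + ∑ v, t v * (if a ∈ compSet F E v then 1 else 0) := by
    rw [ftAux, Pi.add_apply, hsum, chiSet, Set.indicator_apply, Pi.one_apply]
  by_cases haE : a ∈ E
  · have : ∀ v, a ∉ compSet F E v := by
      rintro v ⟨h, -⟩; exact h.2 haE
    rw [hE', if_pos haE, if_pos haE, Finset.sum_eq_zero fun v _ => by
      rw [if_neg (this v), mul_zero]]
    ring
  · by_cases haFE : a ∈ F \ E
    · rw [hE', if_neg haE, if_neg haE, dif_pos haFE,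
        Finset.sum_eq_single ((compGraph F E).connectedComponentMk ⟨a, haFE⟩)]
      · rw [if_pos ⟨haFE, rfl⟩]; ring
      · intro v _ hv
        rw [if_neg, mul_zero]
        rintro ⟨h', rfl⟩
        exact hv rfl
      · intro h; exact absurd (Finset.mem_univ _) h
    · rw [hE', if_neg haE, if_neg haE, dif_neg haFE, Finset.sum_eq_zero fun v _ => by
        rw [if_neg, mul_zero]; rintro ⟨h', -⟩; exact haFE h']
      ring

lemma ft_affine (t s : (compGraph F E).ConnectedComponent → ℝ) (c c' : ℝ)
    (hcc : c + c' = 1) :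
    ftAux E F (c • t + c' • s) = c • ftAux E F t + c' • ftAux E F s := by
  funext a
  simp only [Pi.add_apply, Pi.smul_apply, smul_eq_mul, ft_eval]
  split_ifs <;> ring_nf <;> linarith

lemma comp_eq_of_le {a b : P} (ha : a ∈ F \ E) (hb : b ∈ F \ E) (hab : a ≤ b) :
    (compGraph F E).connectedComponentMk ⟨a, ha⟩
      = (compGraph F E).connectedComponentMk ⟨b, hb⟩ := by
  by_cases hne : a = b
  · subst hne; rfl
  · refine SimpleGraph.ConnectedComponent.sound (SimpleGraph.Adj.reachable ?_)
    rw [compGraph, SimpleGraph.fromRel_adj]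
    exact ⟨fun h => hne (congrArg Subtype.val h), Or.inl hab⟩

lemma ft_mem_polytope (hE : ∀ a ∈ E, ∀ b, a ≤ b → b ∈ E)
    (hF : ∀ a ∈ F, ∀ b, a ≤ b → b ∈ F) (hEF : E ⊆ F)
    (t : (compGraph F E).ConnectedComponent → ℝ) (ht : ∀ v, 0 ≤ t v ∧ t v ≤ 1) :
    ftAux E F t ∈ orderPolytope P := by
  have hbd : ∀ a : P, 0 ≤ ftAux E F t a ∧ ftAux E F t a ≤ 1 := by
    intro a
    rw [ft_eval]
    split_ifs with h1 h2
    · exact ⟨zero_le_one, le_refl 1⟩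
    · exact ht _
    · exact ⟨le_refl 0, zero_le_one⟩
  refine ⟨hbd, fun a b hab => ?_⟩
  rw [ft_eval, ft_eval]
  by_cases hbE : b ∈ E
  · rw [if_pos hbE]
    split_ifs with h1 h2
    · exact le_refl 1
    · exact (ht _).2
    · exact zero_le_one
  · have haE : a ∉ E := fun h => hbE (hE a h b hab)
    rw [if_neg haE, if_neg hbE]
    by_cases hbF : b ∈ F \ E
    · rw [dif_pos hbF]
      by_cases haF : a ∈ F \ E
      · rw [dif_pos haF, comp_eq_of_le haF hbF hab]
      · rw [dif_neg haF]; exact (ht _).1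
    · have haF : a ∉ F \ E := by
        rintro ⟨haF', -⟩
        exact hbF ⟨hF a haF' b hab, hbE⟩
      rw [dif_neg haF, dif_neg hbF]

lemma ft_const_on_comp (t : (compGraph F E).ConnectedComponent → ℝ) (u : ↥(F \ E)) :
    ftAux E F t (u : P) = t ((compGraph F E).connectedComponentMk u) := by
  rw [ft_eval, if_neg u.2.2, dif_pos u.2]

/-- Criterion for membership in the Minkowski-sum set. -/
lemma ft_of_criteria {x : P → ℝ} (hx : x ∈ orderPolytope P)
    (h1 : ∀ a ∈ E, x a = 1) (h0 : ∀ a, a ∉ F → x a = 0)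
    (hc : ∀ (u w : ↥(F \ E)), (compGraph F E).connectedComponentMk u
      = (compGraph F E).connectedComponentMk w → x (u : P) = x (w : P)) :
    ∃ t : (compGraph F E).ConnectedComponent → ℝ,
      (∀ v, 0 ≤ t v ∧ t v ≤ 1) ∧ x = ftAux E F t := by
  refine ⟨fun v => x ((Quot.out v : ↥(F \ E)) : P), fun v => (hx.1 _), ?_⟩
  funext a
  rw [ft_eval]
  by_cases haE : a ∈ E
  · rw [if_pos haE]; exact h1 a haE
  · rw [if_neg haE]
    by_cases haFE : a ∈ F \ E
    · rw [dif_pos haFE]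
      refine hc ⟨a, haFE⟩ _ ?_
      exact (Quot.out_eq _).symm
    · rw [dif_neg haFE]
      exact h0 a fun haF => haFE ⟨haF, haE⟩

end Aux

/-- for order filters `E ⊆ F` of a finite poset `P`, with
`P'_v = compSet F E v` the connected components of `F \ E`, the set
`C = conv{χ_E + Σ_{v ∈ S} χ_{P'_v} : S a set of components}` is a face of the order
polytope `O(P)` containing `χ_E` and `χ_F`, it is contained in every face of `O(P)`
containing both, and it equals the Minkowski sum
`χ_E + [0,1]·χ_{P'_1} + ⋯ + [0,1]·χ_{P'_d}` (hence is a cube of dimension `d`). -/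
theorem stmt14 {P : Type*} [PartialOrder P] [Fintype P]
    (E F : Set P)
    (hE : ∀ a ∈ E, ∀ b, a ≤ b → b ∈ E)
    (hF : ∀ a ∈ F, ∀ b, a ≤ b → b ∈ F)
    (hEF : E ⊆ F)
    (C : Set (P → ℝ))
    (hC : C = convexHull ℝ
      {x | ∃ S : Set (compGraph F E).ConnectedComponent,
        x = chiSet E + ∑ᶠ v ∈ S, chiSet (compSet F E v)}) :
    IsExtreme ℝ (orderPolytope P) C ∧
    chiSet E ∈ C ∧ chiSet F ∈ C ∧
    (∀ C' : Set (P → ℝ), IsExtreme ℝ (orderPolytope P) C' → Convex ℝ C' →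
      chiSet E ∈ C' → chiSet F ∈ C' → C ⊆ C') ∧
    C = {x | ∃ t : (compGraph F E).ConnectedComponent → ℝ,
        (∀ v, 0 ≤ t v ∧ t v ≤ 1) ∧
        x = chiSet E + ∑ᶠ v, t v • chiSet (compSet F E v)} := by
  haveI : Fintype (compGraph F E).ConnectedComponent := Fintype.ofFinite _
  set V : Set (P → ℝ) := {x | ∃ S : Set (compGraph F E).ConnectedComponent,
        x = chiSet E + ∑ᶠ v ∈ S, chiSet (compSet F E v)} with hV
  set M : Set (P → ℝ) := {x | ∃ t : (compGraph F E).ConnectedComponent → ℝ,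
        (∀ v, 0 ≤ t v ∧ t v ≤ 1) ∧
        x = chiSet E + ∑ᶠ v, t v • chiSet (compSet F E v)} with hM
  have hMft : M = {x | ∃ t : (compGraph F E).ConnectedComponent → ℝ,
        (∀ v, 0 ≤ t v ∧ t v ≤ 1) ∧ x = ftAux E F t} := rfl
  -- vertex sums as ftAux of indicator
  have hvert : ∀ S : Set (compGraph F E).ConnectedComponent,
      chiSet E + ∑ᶠ v ∈ S, chiSet (compSet F E v)
        = ftAux E F (fun v => if v ∈ S then 1 else 0) := by
    intro S
    rw [ftAux, finsum_mem_def]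
    congr 1
    refine finsum_congr fun v => ?_
    by_cases hv : v ∈ S
    · rw [Set.indicator_of_mem hv, if_pos hv, one_smul]
    · rw [Set.indicator_of_notMem hv, if_neg hv, zero_smul]
  -- V ⊆ M
  have hVM : V ⊆ M := by
    rintro x ⟨S, rfl⟩
    exact ⟨fun v => if v ∈ S then 1 else 0, fun v => by dsimp only; split_ifs <;> norm_num,
      hvert S⟩
  -- M is convex
  have hMconv : Convex ℝ M := by
    rintro x ⟨t, ht, rfl⟩ y ⟨s, hs, rfl⟩ c c' hc0 hc0' hcc
    refine ⟨c • t + c' • s, fun v => ?_, ?_⟩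
    · have h1 := (ht v).1; have h2 := (ht v).2
      have h3 := (hs v).1; have h4 := (hs v).2
      constructor
      · simpa using add_nonneg (mul_nonneg hc0 h1) (mul_nonneg hc0' h3)
      · simp only [Pi.add_apply, Pi.smul_apply, smul_eq_mul]
        nlinarith
    · exact (ft_affine t s c c' hcc).symm
  -- M ⊆ convexHull V
  have hMhull : M ⊆ convexHull ℝ V := by
    rintro x ⟨t, ht, rfl⟩
    suffices H : ∀ s : Finset (compGraph F E).ConnectedComponent,
        ∀ t : (compGraph F E).ConnectedComponent → ℝ,
        (∀ v, 0 ≤ t v ∧ t v ≤ 1) → (∀ v ∉ s, t v = 0 ∨ t v = 1) →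
        ftAux E F t ∈ convexHull ℝ V by
      exact H Finset.univ t ht (fun v hv => absurd (Finset.mem_univ v) hv)
    intro s
    induction s using Finset.induction_on with
    | empty =>
      intro t ht h01
      refine subset_convexHull ℝ V ⟨{v | t v = 1}, ?_⟩
      suffices ht' : t = fun v => if v ∈ {v | t v = 1} then 1 else 0 by
        rw [hvert, ← ht']
      funext v
      rcases h01 v (by simp) with h | h
      · simp [Set.mem_setOf_eq, h]
      · simp [Set.mem_setOf_eq, h]
    | insert _ _ hw ih =>
      rename_i w s'
      intro t ht h01
      set c := t w with hc
      have hc0 : 0 ≤ c := (ht w).1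
      have hc1 : c ≤ 1 := (ht w).2
      set t0 := Function.update t w 0 with ht0
      set t1 := Function.update t w 1 with ht1
      have hdec : t = (1 - c) • t0 + c • t1 := by
        funext v
        by_cases hv : v = w
        · subst hv; simp [ht0, ht1, hc]
        · simp [ht0, ht1, Function.update_of_ne hv]; ring
      have key : ftAux E F t = (1 - c) • ftAux E F t0 + c • ftAux E F t1 := by
        rw [hdec, ft_affine _ _ _ _ (by ring)]
      rw [key]
      have hb0 : ∀ v, (0 ≤ t0 v ∧ t0 v ≤ 1) := by
        intro v; by_cases hv : v = w
        · subst hv; simp [ht0]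
        · simp [ht0, Function.update_of_ne hv]; exact ht v
      have hb1 : ∀ v, (0 ≤ t1 v ∧ t1 v ≤ 1) := by
        intro v; by_cases hv : v = w
        · subst hv; simp [ht1]
        · simp [ht1, Function.update_of_ne hv]; exact ht v
      have ho0 : ∀ v ∉ s', t0 v = 0 ∨ t0 v = 1 := by
        intro v hv; by_cases hvw : v = w
        · subst hvw; left; simp [ht0]
        · rw [ht0, Function.update_of_ne hvw]
          exact h01 v (by simp [hvw, hv])
      have ho1 : ∀ v ∉ s', t1 v = 0 ∨ t1 v = 1 := by
        intro v hv; by_cases hvw : v = w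
        · subst hvw; right; simp [ht1]
        · rw [ht1, Function.update_of_ne hvw]
          exact h01 v (by simp [hvw, hv])
      exact (convex_convexHull ℝ V) (ih t0 hb0 ho0) (ih t1 hb1 ho1)
        (by linarith) hc0 (by ring)
  have keyEq : convexHull ℝ V = M :=
    le_antisymm (convexHull_min hVM hMconv) hMhull
  have hCM : C = M := by rw [hC, keyEq]
  -- C ⊆ orderPolytope
  have hCO : C ⊆ orderPolytope P := by
    rw [hCM]
    rintro x ⟨t, ht, rfl⟩
    exact ft_mem_polytope hE hF hEF t ht
  -- extreme helper
  have extAux : ∀ x₁ x₂ : P → ℝ, x₁ ∈ orderPolytope P → x₂ ∈ orderPolytope P →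
      ∀ x ∈ M, x ∈ openSegment ℝ x₁ x₂ → x₁ ∈ M := by
    rintro y z hy hz x ⟨t, ht, hxe⟩ ⟨a, b, ha, hb, hab, hseg⟩
    have hxe' : x = ftAux E F t := hxe
    have hseg' : ∀ q : P, a * y q + b * z q = ftAux E F t q := by
      intro q
      have h := congrFun hseg q
      rw [hxe'] at h
      simpa using h
    rw [hMft]
    refine ft_of_criteria hy ?_ ?_ ?_
    · intro p hp
      have hx1 : ftAux E F t p = 1 := by rw [ft_eval, if_pos hp]
      have h1 := (hy.1 p).2
      have h2 := (hz.1 p).2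
      have h3 := hseg' p
      nlinarith
    · intro p hp
      have hpE : p ∉ E := fun h => hp (hEF h)
      have hx0 : ftAux E F t p = 0 := by
        rw [ft_eval, if_neg hpE, dif_neg (fun h => hp h.1)]
      have h1 := (hy.1 p).1
      have h2 := (hz.1 p).1
      have h3 := hseg' p
      nlinarith
    · -- constancy on components
      have step : ∀ u w : ↥(F \ E), (compGraph F E).Adj u w → y (u : P) = y (w : P) := by
        intro u w hadj
        have hxuw : ftAux E F t (u : P) = ftAux E F t (w : P) := by
          rw [ft_const_on_comp, ft_const_on_comp,
            SimpleGraph.ConnectedComponent.sound (SimpleGraph.Adj.reachable hadj)]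
        have hx := hseg' (u : P)
        have hx' := hseg' (w : P)
        rw [compGraph, SimpleGraph.fromRel_adj] at hadj
        rcases hadj.2 with hle | hle
        · have hy' := hy.2 _ _ hle
          have hz' := hz.2 _ _ hle
          nlinarith
        · have hy' := hy.2 _ _ hle
          have hz' := hz.2 _ _ hle
          nlinarith
      have walkstep : ∀ (u w : ↥(F \ E)) (p : (compGraph F E).Walk u w),
          y (u : P) = y (w : P) := by
        intro u w p
        induction p with
        | nil => rfl
        | cons hadj p ih => exact (step _ _ hadj).trans ih
      intro u w huw
      obtain ⟨p⟩ := SimpleGraph.ConnectedComponent.exact huw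
      exact walkstep u w p
  have hExt : IsExtreme ℝ (orderPolytope P) C := by
    refine ⟨hCO, fun x₁ hx₁ x₂ hx₂ x hx hseg => ?_⟩
    rw [hCM] at hx ⊢
    exact extAux x₁ x₂ hx₁ hx₂ x hx hseg
  -- membership of χ_E and χ_F
  have hchiEV : chiSet E ∈ V := by
    refine ⟨∅, ?_⟩
    rw [finsum_mem_empty, add_zero]
  have hchiFV : chiSet F ∈ V := by
    refine ⟨Set.univ, ?_⟩
    rw [hvert]
    funext a
    rw [ft_eval]
    simp only [Set.mem_univ, if_true]
    by_cases haE : a ∈ E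
    · rw [if_pos haE, chiSet, Set.indicator_of_mem (hEF haE), Pi.one_apply]
    · rw [if_neg haE]
      by_cases haFE : a ∈ F \ E
      · rw [dif_pos haFE, chiSet, Set.indicator_of_mem haFE.1, Pi.one_apply]
      · rw [dif_neg haFE, chiSet,
          Set.indicator_of_notMem (fun h => haFE ⟨h, haE⟩), ]
  have hchiE : chiSet E ∈ C := hC ▸ subset_convexHull ℝ V hchiEV
  have hchiF : chiSet F ∈ C := hC ▸ subset_convexHull ℝ V hchiFV
  -- minimality
  have hmin : ∀ C' : Set (P → ℝ), IsExtreme ℝ (orderPolytope P) C' → Convex ℝ C' →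
      chiSet E ∈ C' → chiSet F ∈ C' → C ⊆ C' := by
    intro C' hC'ext hC'conv hC'E hC'F
    rw [hC]
    refine convexHull_min ?_ hC'conv
    rintro x ⟨S, rfl⟩
    -- vertices and their complements
    set xS := chiSet E + ∑ᶠ v ∈ S, chiSet (compSet F E v) with hxS
    set xSc := chiSet E + ∑ᶠ v ∈ Sᶜ, chiSet (compSet F E v) with hxSc
    have hxSM : xS ∈ M := hVM ⟨S, rfl⟩
    have hxScM : xSc ∈ M := hVM ⟨Sᶜ, rfl⟩
    have hxSO : xS ∈ orderPolytope P := by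
      obtain ⟨t, ht, hteq⟩ := hxSM
      rw [hteq]; exact ft_mem_polytope hE hF hEF t ht
    have hxScO : xSc ∈ orderPolytope P := by
      obtain ⟨t, ht, hteq⟩ := hxScM
      rw [hteq]; exact ft_mem_polytope hE hF hEF t ht
    have hmid : (1/2 : ℝ) • chiSet E + (1/2 : ℝ) • chiSet F
        = (1/2 : ℝ) • xS + (1/2 : ℝ) • xSc := by
      have h1 : chiSet E = ftAux E F (fun _ => 0) := by
        funext a
        rw [ft_eval, chiSet, Set.indicator_apply]
        split_ifs <;> rfl
      have h2 : chiSet F = ftAux E F (fun _ => 1) := by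
        funext a
        rw [ft_eval, chiSet, Set.indicator_apply, Pi.one_apply]
        by_cases haE : a ∈ E
        · rw [if_pos (hEF haE), if_pos haE]
        · by_cases haFE : a ∈ F \ E
          · rw [if_pos haFE.1, if_neg haE, dif_pos haFE]
          · rw [if_neg (fun h => haFE ⟨h, haE⟩), if_neg haE, dif_neg haFE]
      rw [h1, h2, hxS, hxSc, hvert, hvert]
      rw [← ft_affine _ _ _ _ (by norm_num : (1/2:ℝ) + 1/2 = 1),
        ← ft_affine _ _ _ _ (by norm_num : (1/2:ℝ) + 1/2 = 1)]
      refine congrArg (ftAux E F) ?_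
      funext v
      simp only [Pi.add_apply, Pi.smul_apply, smul_eq_mul, Set.mem_compl_iff]
      by_cases hv : v ∈ S <;> simp [hv] <;> norm_num
    have hmidC' : (1/2 : ℝ) • chiSet E + (1/2 : ℝ) • chiSet F ∈ C' :=
      hC'conv hC'E hC'F (by norm_num) (by norm_num) (by norm_num)
    have hseg : (1/2 : ℝ) • chiSet E + (1/2 : ℝ) • chiSet F ∈ openSegment ℝ xS xSc :=
      ⟨1/2, 1/2, by norm_num, by norm_num, by norm_num, hmid.symm⟩
    exact hC'ext.2 hxSO hxScO hmidC' hseg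
  exact ⟨hExt, hchiE, hchiF, hmin, hCM⟩
end
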